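/- Let G = (V,E) be a finite simple graph and A, B ⊆ V. If there exists at least one A-B-path in G and every A-B-path in G has odd length, then σ(G₋A)·σ(G₋B) > σ(G)·σ(G₋A₋B). -/

import Mathlib

open scoped Classical

/-- The number of independent vertex sets of `G` avoiding the set `W`
(i.e. `σ(G₋W)`, the number of independent sets of `G` with `W` deleted). -/
noncomputable def sigmaDel {V : Type*} [Fintype V] (G : SimpleGraph V) (W : Set V) : ℕ :=
  (Finset.univ.filter
    (fun s : Finset V => (∀ v ∈ s, v ∉ W) ∧ ∀ u ∈ s, ∀ v ∈ s, ¬ G.Adj u v)).card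

/-- The number of independent vertex sets of `G`. -/
noncomputable def sigmaG {V : Type*} [Fintype V] (G : SimpleGraph V) : ℕ :=
  sigmaDel G ∅

/-- `p` is an `A`-`B`-path: a path meeting `A` exactly in its first vertex
and `B` exactly in its last vertex. -/
def IsABPath {V : Type*} (G : SimpleGraph V) (A B : Set V) {a b : V} (p : G.Walk a b) : Prop :=
  p.IsPath ∧ a ∈ A ∧ b ∈ B ∧ (∀ x ∈ p.support, x ∈ A → x = a) ∧ (∀ x ∈ p.support, x ∈ B → x = b)

namespace SigmaAux

open scoped symmDiff

variable {V : Type*} {G : SimpleGraph V}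

def ReachIn (G : SimpleGraph V) (W : Set V) (u v : V) : Prop :=
  ∃ p : G.Walk u v, ∀ x ∈ p.support, x ∈ W

lemma ReachIn.refl {W : Set V} {u : V} (hu : u ∈ W) : ReachIn G W u u :=
  ⟨SimpleGraph.Walk.nil, by simpa⟩

lemma ReachIn.concat {W : Set V} {u v w : V} (h : ReachIn G W u v) (hadj : G.Adj v w)
    (hw : w ∈ W) : ReachIn G W u w := by
  obtain ⟨p, hp⟩ := h
  refine ⟨p.concat hadj, ?_⟩
  intro x hx
  rw [SimpleGraph.Walk.support_concat, List.mem_append] at hx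
  rcases hx with hx | hx
  · exact hp x hx
  · simp only [List.mem_singleton] at hx; subst hx; exact hw

lemma walk_parity (P : V → Prop) {x y : V} (q : G.Walk x y)
    (h : ∀ u v, u ∈ q.support → v ∈ q.support → G.Adj u v → (P u ↔ ¬ P v)) :
    ((P x ↔ P y) ↔ Even q.length) := by
  induction q with
  | nil => simp
  | @cons a c y hadj q ih =>
    have h1 : P a ↔ ¬ P c :=
      h a c (by simp) (by simp [SimpleGraph.Walk.start_mem_support]) hadj
    have ih' := ih (fun u v hu hv hadj' => h u v (by simp [hu]) (by simp [hv]) hadj')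
    rw [SimpleGraph.Walk.length_cons, Nat.even_add_one, ← ih']
    tauto

lemma one_le_length_of_ne {u v : V} (p : G.Walk u v) (h : u ≠ v) : 1 ≤ p.length := by
  rcases Nat.eq_zero_or_pos p.length with h0 | h1
  · exact absurd (SimpleGraph.Walk.eq_of_length_eq_zero h0) h
  · exact h1

lemma edge_mem_of_length_one {u v : V} (p : G.Walk u v) (h : p.length = 1) :
    s(u, v) ∈ p.edges := by
  cases p with
  | nil => simp at h
  | cons hadj q =>
    have : q.length = 0 := by simpa using h
    have := SimpleGraph.Walk.eq_of_length_eq_zero this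
    subst this
    simp

lemma exists_ABPath_of_walk (A B : Set V) :
    ∀ (n : ℕ) {a b : V} (p : G.Walk a b), p.length ≤ n → p.IsPath → a ∈ A → b ∈ B →
    ∃ a' b', ∃ q : G.Walk a' b', IsABPath G A B q ∧ (∀ x ∈ q.support, x ∈ p.support) ∧
      q.length ≤ p.length := by
  intro n
  induction n with
  | zero =>
    intro a b p hlen hp ha hb
    refine ⟨a, b, p, ⟨hp, ha, hb, ?_, ?_⟩, fun x hx => hx, le_rfl⟩
    · intro x hx _
      have : p.length = 0 := Nat.le_zero.mp hlen
      have hab : a = b := SimpleGraph.Walk.eq_of_length_eq_zero this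
      subst hab
      cases p with
      | nil => simpa using hx
      | cons h q => simp [SimpleGraph.Walk.length_cons] at this
    · intro x hx _
      have : p.length = 0 := Nat.le_zero.mp hlen
      have hab : a = b := SimpleGraph.Walk.eq_of_length_eq_zero this
      subst hab
      cases p with
      | nil => simpa using hx
      | cons h q => simp [SimpleGraph.Walk.length_cons] at this
  | succ n ih =>
    intro a b p hlen hp ha hb
    by_cases hA : ∃ x ∈ p.support, x ∈ A ∧ x ≠ a
    · obtain ⟨x, hxs, hxA, hxa⟩ := hA
      have hlt : (p.dropUntil x hxs).length < p.length := by
        have hspec := congrArg SimpleGraph.Walk.length (p.take_spec hxs)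
        rw [SimpleGraph.Walk.length_append] at hspec
        have h1 : 1 ≤ (p.takeUntil x hxs).length :=
          one_le_length_of_ne _ (Ne.symm hxa)
        omega
      obtain ⟨a', b', q, hq, hsub, hql⟩ :=
        ih (p.dropUntil x hxs) (by omega) (hp.dropUntil hxs) hxA hb
      exact ⟨a', b', q, hq, fun y hy => p.support_dropUntil_subset hxs (hsub y hy),
        le_trans hql (le_of_lt hlt)⟩
    · by_cases hB : ∃ x ∈ p.support, x ∈ B ∧ x ≠ b
      · obtain ⟨x, hxs, hxB, hxb⟩ := hB
        have hlt : (p.takeUntil x hxs).length < p.length := by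
          have hspec := congrArg SimpleGraph.Walk.length (p.take_spec hxs)
          rw [SimpleGraph.Walk.length_append] at hspec
          have h1 : 1 ≤ (p.dropUntil x hxs).length := one_le_length_of_ne _ hxb
          omega
        obtain ⟨a', b', q, hq, hsub, hql⟩ :=
          ih (p.takeUntil x hxs) (by omega) (hp.takeUntil hxs) ha hxB
        exact ⟨a', b', q, hq, fun y hy => p.support_takeUntil_subset hxs (hsub y hy),
          le_trans hql (le_of_lt hlt)⟩
      · push_neg at hA hB
        exact ⟨a, b, p, ⟨hp, ha, hb, fun x hx hxA => hA x hx hxA,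
            fun x hx hxB => hB x hx hxB⟩, fun x hx => hx, le_rfl⟩


open SimpleGraph Walk in
lemma dropUntil_cons_self [DecidableEq V] {a c b : V} (h : G.Adj a c) (q : G.Walk c b)
    (hm : a ∈ (SimpleGraph.Walk.cons h q).support) :
    (SimpleGraph.Walk.cons h q).dropUntil a hm = SimpleGraph.Walk.cons h q := by
  simp [SimpleGraph.Walk.dropUntil]

open SimpleGraph Walk in
lemma dropUntil_cons_of_ne [DecidableEq V] {a c b u : V} (h : G.Adj a c) (q : G.Walk c b)
    (hne : a ≠ u) (hm : u ∈ (SimpleGraph.Walk.cons h q).support) :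
    (SimpleGraph.Walk.cons h q).dropUntil u hm
      = q.dropUntil u (by
          rcases (by simpa using hm : u = a ∨ u ∈ q.support) with h' | h'
          · exact absurd h'.symm hne
          · exact h') := by
  simp [SimpleGraph.Walk.dropUntil, hne]

lemma mem_dropUntil_or [DecidableEq V] {a b u v : V} (p : G.Walk a b)
    (hu : u ∈ p.support) (hv : v ∈ p.support) :
    v ∈ (p.dropUntil u hu).support ∨ u ∈ (p.dropUntil v hv).support := by
  induction p with
  | nil =>
    rw [SimpleGraph.Walk.mem_support_nil_iff] at hu hv
    subst hu; subst hv
    left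
    exact SimpleGraph.Walk.end_mem_support _
  | @cons a c b h q ih =>
    by_cases hua : a = u
    · subst hua
      left
      rw [dropUntil_cons_self]
      exact hv
    · by_cases hva : a = v
      · subst hva
        right
        rw [dropUntil_cons_self]
        exact hu
      · have hu' : u ∈ q.support := by
          rcases (by simpa using hu : u = a ∨ u ∈ q.support) with h' | h'
          · exact absurd h'.symm hua
          · exact h'
        have hv' : v ∈ q.support := by
          rcases (by simpa using hv : v = a ∨ v ∈ q.support) with h' | h'
          · exact absurd h'.symm hva
          · exact h'
        rw [dropUntil_cons_of_ne h q hua, dropUntil_cons_of_ne h q hva]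
        exact ih hu' hv'

/-- The even-position and odd-position vertices of a walk. -/
def altSups [DecidableEq V] : ∀ {a b : V}, G.Walk a b → Finset V × Finset V
  | a, _, SimpleGraph.Walk.nil => ({a}, ∅)
  | a, _, SimpleGraph.Walk.cons _ p => (insert a (altSups p).2, (altSups p).1)

variable [DecidableEq V]

@[simp] lemma altSups_nil {a : V} : (altSups (SimpleGraph.Walk.nil : G.Walk a a)) = ({a}, ∅) := rfl

@[simp] lemma altSups_cons {a c b : V} (h : G.Adj a c) (p : G.Walk c b) :
    altSups (SimpleGraph.Walk.cons h p) = (insert a (altSups p).2, (altSups p).1) := rfl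

lemma mem_altSups_iff {a b : V} (p : G.Walk a b) (x : V) :
    (x ∈ (altSups p).1 ∨ x ∈ (altSups p).2) ↔ x ∈ p.support := by
  induction p with
  | nil => simp
  | @cons a c b h q ih =>
    simp only [altSups_cons, Finset.mem_insert, SimpleGraph.Walk.support_cons, List.mem_cons]
    rw [← ih]
    tauto

lemma start_mem_altSups {a b : V} (p : G.Walk a b) : a ∈ (altSups p).1 := by
  cases p <;> simp

lemma altSups_disjoint {a b : V} (p : G.Walk a b) (hp : p.IsPath) (x : V) :
    ¬ (x ∈ (altSups p).1 ∧ x ∈ (altSups p).2) := by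
  induction p with
  | nil => simp
  | @cons a c b h q ih =>
    rintro ⟨h1, h2⟩
    simp only [altSups_cons, Finset.mem_insert] at h1 h2
    rcases h1 with rfl | h1
    · exact (SimpleGraph.Walk.cons_isPath_iff _ _ |>.mp hp).2
        ((mem_altSups_iff q x).mp (Or.inl h2))
    · exact ih (SimpleGraph.Walk.cons_isPath_iff _ _ |>.mp hp).1 ⟨h2, h1⟩

lemma end_mem_altSups {a b : V} (p : G.Walk a b) :
    (Even p.length → b ∈ (altSups p).1) ∧ (Odd p.length → b ∈ (altSups p).2) := by
  induction p with
  | nil => simp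
  | @cons a c b h q ih =>
    constructor
    · intro he
      have : Odd q.length := by
        rcases Nat.even_or_odd q.length with h' | h'
        · exfalso
          rw [SimpleGraph.Walk.length_cons, Nat.even_add_one] at he
          exact he h'
        · exact h'
      simp only [altSups_cons, Finset.mem_insert]
      exact Or.inr (ih.2 this)
    · intro ho
      have : Even q.length := by
        rcases Nat.even_or_odd q.length with h' | h'
        · exact h'
        · exfalso
          rw [SimpleGraph.Walk.length_cons, Nat.odd_add_one] at ho
          exact ho h'

      simp only [altSups_cons]
      exact ih.1 this

lemma altSups_edge {a b : V} (p : G.Walk a b) (hp : p.IsPath) {u v : V}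
    (he : s(u, v) ∈ p.edges) :
    (u ∈ (altSups p).1 → v ∈ (altSups p).1 → False) ∧
    (u ∈ (altSups p).2 → v ∈ (altSups p).2 → False) := by
  induction p with
  | nil => simp at he
  | @cons a c b h q ih =>
    have hpq : q.IsPath := (SimpleGraph.Walk.cons_isPath_iff _ _ |>.mp hp).1
    have has : a ∉ q.support := (SimpleGraph.Walk.cons_isPath_iff _ _ |>.mp hp).2
    rw [SimpleGraph.Walk.edges_cons, List.mem_cons] at he
    rcases he with he | he
    · rw [Sym2.eq_iff] at he
      constructor
      · intro h1 h2
        simp only [altSups_cons, Finset.mem_insert] at h1 h2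
        rcases he with ⟨rfl, rfl⟩ | ⟨rfl, rfl⟩
        · rcases h2 with rfl | h2
          · exact G.ne_of_adj h rfl
          · exact altSups_disjoint q hpq v ⟨start_mem_altSups q, h2⟩
        · rcases h1 with rfl | h1
          · exact G.ne_of_adj h rfl
          · exact altSups_disjoint q hpq u ⟨start_mem_altSups q, h1⟩
      · intro h1 h2
        simp only [altSups_cons] at h1 h2
        rcases he with ⟨rfl, rfl⟩ | ⟨rfl, rfl⟩
        · exact has ((mem_altSups_iff q u).mp (Or.inl h1))
        · exact has ((mem_altSups_iff q v).mp (Or.inl h2))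
    · have hus : u ∈ q.support := q.fst_mem_support_of_mem_edges he
      have hvs : v ∈ q.support := q.snd_mem_support_of_mem_edges he
      constructor
      · intro h1 h2
        simp only [altSups_cons, Finset.mem_insert] at h1 h2
        rcases h1 with rfl | h1
        · exact has hus
        rcases h2 with rfl | h2
        · exact has hvs
        exact (ih hpq he).2 h1 h2
      · intro h1 h2
        simp only [altSups_cons] at h1 h2
        exact (ih hpq he).1 h1 h2


lemma induced_of_min {A B : Set V} {a b : V} {p : G.Walk a b} [DecidableEq V]
    (hP : IsABPath G A B p)
    (hmin : ∀ a' b', ∀ q : G.Walk a' b', IsABPath G A B q → p.length ≤ q.length)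
    {u v : V} (hu : u ∈ p.support) (hv : v ∈ p.support) (hadj : G.Adj u v) :
    s(u, v) ∈ p.edges := by
  by_contra hne
  have key : ∀ (u v : V) (hu : u ∈ p.support), G.Adj u v → s(u, v) ∉ p.edges →
      v ∈ (p.dropUntil u hu).support → False := by
    intro u v hu hadj hne hv'
    have hvne : u ≠ v := G.ne_of_adj hadj
    set d := p.dropUntil u hu with hd
    set t := d.takeUntil v hv' with htdef
    set r := d.dropUntil v hv' with hrdef
    have ht1 : 1 ≤ t.length := one_le_length_of_ne _ hvne
    have ht2 : t.length ≠ 1 := by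
      intro h1
      exact hne (p.edges_dropUntil_subset hu (d.edges_takeUntil_subset hv'
        (edge_mem_of_length_one t h1)))
    set w := (p.takeUntil u hu).append (SimpleGraph.Walk.cons hadj r) with hwdef
    have hwlen : w.length < p.length := by
      have h1 := congrArg SimpleGraph.Walk.length (p.take_spec hu)
      rw [SimpleGraph.Walk.length_append] at h1
      have h2 := congrArg SimpleGraph.Walk.length (d.take_spec hv')
      rw [SimpleGraph.Walk.length_append] at h2
      rw [← htdef, ← hrdef] at h2
      rw [← hd] at h1
      have h3 : w.length = (p.takeUntil u hu).length + (1 + r.length) := by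
        rw [hwdef, SimpleGraph.Walk.length_append, SimpleGraph.Walk.length_cons]
        omega
      omega
    obtain ⟨a', b', q, hq, _, hql⟩ := exists_ABPath_of_walk A B w.bypass.length w.bypass
      le_rfl w.bypass_isPath hP.2.1 hP.2.2.1
    have h4 : p.length ≤ q.length := hmin _ _ q hq
    have h5 : q.length ≤ w.length := le_trans hql w.length_bypass_le
    omega
  rcases mem_dropUntil_or p hu hv with h | h
  · exact key u v hu hadj hne h
  · exact key v u hv hadj.symm (by rwa [Sym2.eq_swap]) h

noncomputable def reachSet (G : SimpleGraph V) (A : Set V) (w : Finset V) : Finset V :=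
  w.filter (fun v => ∃ a ∈ A, ReachIn G (↑w) a v)

lemma mem_reachSet {A : Set V} {w : Finset V} {v : V} :
    v ∈ reachSet G A w ↔ v ∈ w ∧ ∃ a ∈ A, ReachIn G (↑w) a v := Finset.mem_filter

lemma reachSet_closed {A : Set V} {w : Finset V} {u v : V}
    (hu : u ∈ reachSet G A w) (hv : v ∈ w) (hadj : G.Adj u v) : v ∈ reachSet G A w := by
  rw [mem_reachSet] at hu ⊢
  obtain ⟨huw, a, haA, hr⟩ := hu
  exact ⟨hv, a, haA, hr.concat hadj (by exact hv)⟩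

noncomputable def swapMap (G : SimpleGraph V) (A : Set V) (z : Finset V × Finset V) :
    Finset V × Finset V :=
  (z.1 ∆ reachSet G A (z.1 ∆ z.2), z.2 ∆ reachSet G A (z.1 ∆ z.2))

lemma symmDiff_pair (s t u : Finset V) : (s ∆ u) ∆ (t ∆ u) = s ∆ t := by
  rw [symmDiff_symmDiff_symmDiff_comm]
  simp

lemma swapMap_involutive (A : Set V) (z : Finset V × Finset V) :
    swapMap G A (swapMap G A z) = z := by
  obtain ⟨s, t⟩ := z
  simp only [swapMap]
  rw [symmDiff_pair]
  simp [symmDiff_assoc]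

lemma swap_indep {S T U : Finset V}
    (hS : ∀ u ∈ S, ∀ v ∈ S, ¬ G.Adj u v) (hT : ∀ u ∈ T, ∀ v ∈ T, ¬ G.Adj u v)
    (hU : U ⊆ S ∆ T)
    (hcl : ∀ u ∈ U, ∀ v ∈ S ∆ T, G.Adj u v → v ∈ U) :
    ∀ u ∈ S ∆ U, ∀ v ∈ S ∆ U, ¬ G.Adj u v := by
  intro u hu v hv hadj
  rw [Finset.mem_symmDiff] at hu hv
  have hmemT : ∀ x ∈ U, x ∉ S → x ∈ T := fun x hx hxs => by
    have := hU hx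
    rw [Finset.mem_symmDiff] at this
    tauto
  rcases hu with ⟨huS, huU⟩ | ⟨huU, huS⟩
  · rcases hv with ⟨hvS, hvU⟩ | ⟨hvU, hvS⟩
    · exact hS u huS v hvS hadj
    · by_cases hut : u ∈ T
      · exact hT u hut v (hmemT v hvU hvS) hadj
      · exact huU (hcl v hvU u (Finset.mem_symmDiff.mpr (Or.inl ⟨huS, hut⟩)) hadj.symm)
  · rcases hv with ⟨hvS, hvU⟩ | ⟨hvU, hvS⟩
    · by_cases hvt : v ∈ T
      · exact hT u (hmemT u huU huS) v hvt hadj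
      · exact hvU (hcl u huU v (Finset.mem_symmDiff.mpr (Or.inl ⟨hvS, hvt⟩)) hadj)
    · exact hT u (hmemT u huU huS) v (hmemT v hvU hvS) hadj

end SigmaAux

open SigmaAux Finset
open scoped symmDiff

theorem sigma_ineq_of_odd_ABpaths {V : Type*} [Fintype V] (G : SimpleGraph V) (A B : Set V)
    (hex : ∃ a b, ∃ p : G.Walk a b, IsABPath G A B p)
    (hodd : ∀ a b, ∀ p : G.Walk a b, IsABPath G A B p → Odd p.length) :
    sigmaG G * sigmaDel G (A ∪ B) < sigmaDel G A * sigmaDel G B := by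
  obtain ⟨a0, b0, p0, hp0⟩ := hex
  have hQ : ∃ n, ∃ a b, ∃ p : G.Walk a b, IsABPath G A B p ∧ p.length = n :=
    ⟨p0.length, a0, b0, p0, hp0, rfl⟩
  obtain ⟨a, b, p, hP, hlen⟩ := Nat.find_spec hQ
  have hmin : ∀ a' b', ∀ q : G.Walk a' b', IsABPath G A B q → p.length ≤ q.length := by
    intro a' b' q hq
    rw [hlen]
    exact Nat.find_min' hQ ⟨a', b', q, hq, rfl⟩
  -- the source and target sets
  set src : Finset (Finset V × Finset V) :=
    (Finset.univ.filter
      (fun s : Finset V => (∀ v ∈ s, v ∉ (∅ : Set V)) ∧ ∀ u ∈ s, ∀ v ∈ s, ¬ G.Adj u v)) ×ˢ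
    (Finset.univ.filter
      (fun s : Finset V => (∀ v ∈ s, v ∉ A ∪ B) ∧ ∀ u ∈ s, ∀ v ∈ s, ¬ G.Adj u v)) with hsrc
  set tgt : Finset (Finset V × Finset V) :=
    (Finset.univ.filter
      (fun s : Finset V => (∀ v ∈ s, v ∉ A) ∧ ∀ u ∈ s, ∀ v ∈ s, ¬ G.Adj u v)) ×ˢ
    (Finset.univ.filter
      (fun s : Finset V => (∀ v ∈ s, v ∉ B) ∧ ∀ u ∈ s, ∀ v ∈ s, ¬ G.Adj u v)) with htgt
  have hsrccard : src.card = sigmaG G * sigmaDel G (A ∪ B) := by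
    rw [hsrc, Finset.card_product]
    simp only [sigmaG, sigmaDel]
    try congr!
  have htgtcard : tgt.card = sigmaDel G A * sigmaDel G B := by
    rw [htgt, Finset.card_product]
    simp only [sigmaDel]
    try congr!
  rw [← hsrccard, ← htgtcard]
  -- claim 4 : the reach set avoids B
  have claim4 : ∀ s t : Finset V, (∀ u ∈ s, ∀ v ∈ s, ¬ G.Adj u v) →
      (∀ u ∈ t, ∀ v ∈ t, ¬ G.Adj u v) → (∀ v ∈ t, v ∉ A ∪ B) →
      ∀ x ∈ reachSet G A (s ∆ t), x ∉ B := by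
    intro s t hs ht htAB x hx hxB
    rw [mem_reachSet] at hx
    obtain ⟨hxw, a', ha'A, pw, hpw⟩ := hx
    obtain ⟨a'', b'', q, hq, hqsub, _⟩ := exists_ABPath_of_walk A B pw.bypass.length pw.bypass
      le_rfl pw.bypass_isPath ha'A hxB
    have hodd' := hodd _ _ q hq
    have hsupW : ∀ y ∈ q.support, y ∈ s ∆ t := fun y hy =>
      hpw y (pw.support_bypass_subset (hqsub y hy))
    have halt : ∀ u v, u ∈ q.support → v ∈ q.support → G.Adj u v →
        ((u ∈ s) ↔ ¬ (v ∈ s)) := by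
      intro u v hu hv hadj
      have huw := hsupW u hu
      have hvw := hsupW v hv
      rw [Finset.mem_symmDiff] at huw hvw
      constructor
      · intro hus hvs
        exact hs u hus v hvs hadj
      · intro hvns
        by_contra huns
        have hut : u ∈ t := by tauto
        have hvt : v ∈ t := by tauto
        exact ht u hut v hvt hadj
    have hends : (a'' ∈ s) ↔ (b'' ∈ s) := by
      have h1 : a'' ∈ s := by
        have := hsupW a'' q.start_mem_support
        rw [Finset.mem_symmDiff] at this
        rcases this with h | h
        · exact h.1
        · exact absurd (Set.mem_union_left _ hq.2.1) (htAB _ h.1)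
      have h2 : b'' ∈ s := by
        have := hsupW b'' q.end_mem_support
        rw [Finset.mem_symmDiff] at this
        rcases this with h | h
        · exact h.1
        · exact absurd (Set.mem_union_right _ hq.2.2.1) (htAB _ h.1)
      simp [h1, h2]
    have heven := (walk_parity (· ∈ s) q halt).mp hends
    exact (Nat.not_odd_iff_even.mpr heven) hodd'
  -- the image of the swap map lies in the target
  have himg : ∀ z ∈ src, swapMap G A z ∈ tgt := by
    rintro ⟨s, t⟩ hz
    rw [hsrc, Finset.mem_product] at hz
    obtain ⟨hz1, hz2⟩ := hz
    rw [Finset.mem_filter] at hz1 hz2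
    obtain ⟨-, -, hs⟩ := hz1
    obtain ⟨-, htAB, ht⟩ := hz2
    set U := reachSet G A (s ∆ t) with hU
    have hUsub : U ⊆ s ∆ t := fun x hx => (mem_reachSet.mp hx).1
    have hcl : ∀ u ∈ U, ∀ v ∈ s ∆ t, G.Adj u v → v ∈ U := fun u hu v hv hadj =>
      reachSet_closed hu hv hadj
    have hswap : swapMap G A (s, t) = (s ∆ U, t ∆ U) := by simp [swapMap, hU]
    rw [hswap, htgt, Finset.mem_product]
    constructor
    · rw [Finset.mem_filter]
      refine ⟨Finset.mem_univ _, ?_, swap_indep hs ht hUsub hcl⟩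
      -- s ∆ U avoids A
      intro x hx hxA
      rw [Finset.mem_symmDiff] at hx
      rcases hx with ⟨hxs, hxU⟩ | ⟨hxU, hxs⟩
      · have hxt : x ∉ t := fun hxt => htAB x hxt (Set.mem_union_left _ hxA)
        exact hxU (mem_reachSet.mpr ⟨Finset.mem_symmDiff.mpr (Or.inl ⟨hxs, hxt⟩), x, hxA,
          ReachIn.refl (by rw [Finset.mem_coe, Finset.mem_symmDiff]; exact Or.inl ⟨hxs, hxt⟩)⟩)
      · have := hUsub hxU
        rw [Finset.mem_symmDiff] at this
        rcases this with h | h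
        · exact hxs h.1
        · exact htAB x h.1 (Set.mem_union_left _ hxA)
    · rw [Finset.mem_filter]
      refine ⟨Finset.mem_univ _, ?_, ?_⟩
      · -- t ∆ U avoids B
        intro x hx hxB
        rw [Finset.mem_symmDiff] at hx
        rcases hx with ⟨hxt, hxU⟩ | ⟨hxU, hxt⟩
        · exact htAB x hxt (Set.mem_union_right _ hxB)
        · exact claim4 s t hs ht htAB x hxU hxB
      · -- t ∆ U independent
        have hUsub' : U ⊆ t ∆ s := by rwa [symmDiff_comm]
        have hcl' : ∀ u ∈ U, ∀ v ∈ t ∆ s, G.Adj u v → v ∈ U := by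
          rw [symmDiff_comm]; exact hcl
        exact swap_indep ht hs hUsub' hcl'
  -- injectivity
  have hinj : Set.InjOn (swapMap G A) ↑src := by
    intro x _ y _ h
    have := congrArg (swapMap G A) h
    rwa [swapMap_involutive, swapMap_involutive] at this
  -- the witness
  have hOddp := hodd _ _ p hP
  set T0 := (altSups p).1 with hT0
  set S0 := (altSups p).2 with hS0
  have hsupp : ∀ x ∈ p.support, x ∈ S0 ∆ T0 := by
    intro x hx
    rw [Finset.mem_symmDiff]
    rcases (mem_altSups_iff p x).mpr hx with h | h
    · exact Or.inr ⟨h, fun h' => altSups_disjoint p hP.1 x ⟨h, h'⟩⟩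
    · exact Or.inl ⟨h, fun h' => altSups_disjoint p hP.1 x ⟨h', h⟩⟩
  have hbS0 : b ∈ S0 := (end_mem_altSups p).2 hOddp
  have hbT0 : b ∉ T0 := fun h => altSups_disjoint p hP.1 b ⟨h, hbS0⟩
  have haT0 : a ∈ T0 := start_mem_altSups p
  have haS0 : a ∉ S0 := fun h => altSups_disjoint p hP.1 a ⟨haT0, h⟩
  have hinduced : ∀ u v, u ∈ p.support → v ∈ p.support → G.Adj u v → s(u, v) ∈ p.edges :=
    fun u v hu hv hadj => induced_of_min hP hmin hu hv hadj
  have hwit_tgt : (S0, T0) ∈ tgt := by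
    rw [htgt, Finset.mem_product]
    constructor
    · rw [Finset.mem_filter]
      refine ⟨Finset.mem_univ _, ?_, ?_⟩
      · intro x hx hxA
        have hxs : x ∈ p.support := (mem_altSups_iff p x).mp (Or.inr hx)
        have : x = a := hP.2.2.2.1 x hxs hxA
        subst this
        exact haS0 hx
      · intro u hu v hv hadj
        have hus : u ∈ p.support := (mem_altSups_iff p u).mp (Or.inr hu)
        have hvs : v ∈ p.support := (mem_altSups_iff p v).mp (Or.inr hv)
        exact (altSups_edge p hP.1 (hinduced u v hus hvs hadj)).2 hu hv
    · rw [Finset.mem_filter]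
      refine ⟨Finset.mem_univ _, ?_, ?_⟩
      · intro x hx hxB
        have hxs : x ∈ p.support := (mem_altSups_iff p x).mp (Or.inl hx)
        have : x = b := hP.2.2.2.2 x hxs hxB
        subst this
        exact hbT0 hx
      · intro u hu v hv hadj
        have hus : u ∈ p.support := (mem_altSups_iff p u).mp (Or.inl hu)
        have hvs : v ∈ p.support := (mem_altSups_iff p v).mp (Or.inl hv)
        exact (altSups_edge p hP.1 (hinduced u v hus hvs hadj)).1 hu hv
  have hwit_not : (S0, T0) ∉ src.image (swapMap G A) := by
    rw [Finset.mem_image]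
    rintro ⟨⟨s, t⟩, hzsrc, heq⟩
    have hst : s ∆ t = S0 ∆ T0 := by
      have := congrArg (fun z : Finset V × Finset V => z.1 ∆ z.2) heq
      simpa [swapMap, symmDiff_pair] using this
    set U := reachSet G A (s ∆ t) with hU
    have hbU : b ∈ U := by
      rw [hU, mem_reachSet, hst]
      refine ⟨hsupp b p.end_mem_support, a, hP.2.1, p, ?_⟩
      intro x hx
      exact hsupp x hx
    have ht' : t ∆ U = T0 := congrArg Prod.snd heq
    have hbt : b ∈ t := by
      have : b ∈ t ↔ b ∈ t := Iff.rfl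
      rw [← ht'] at hbT0
      rw [Finset.mem_symmDiff] at hbT0
      push_neg at hbT0
      exact hbT0.2 hbU
    rw [hsrc, Finset.mem_product] at hzsrc
    have := (Finset.mem_filter.mp hzsrc.2).2.1 b hbt
    exact this (Set.mem_union_right _ hP.2.2.1)
  -- conclude
  have hsubset : src.image (swapMap G A) ⊆ tgt := by
    intro z hz
    rw [Finset.mem_image] at hz
    obtain ⟨w, hw, rfl⟩ := hz
    exact himg w hw
  calc src.card = (src.image (swapMap G A)).card :=
        (Finset.card_image_of_injOn hinj).symm
    _ < tgt.card := Finset.card_lt_card ⟨hsubset, fun hsup => hwit_not (hsup hwit_tgt)⟩
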